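/- Let h > 0 and let q : [0,1] → ℝ be continuous with q(y) ≥ 0 for all y ∈ [0,1]. If φ : [0,1] → ℝ is twice continuously differentiable on [0,1] and satisfies (κ/h²)·φ''(y) = q(y)·φ(y) for all y ∈ [0,1], φ'(0) = 0, and φ(1) + (L·κ/(κ_L·h))·φ'(1) = 0, then φ(y) = 0 for all y ∈ [0,1]. -/

import Mathlib

open Set MeasureTheory intervalIntegral Filter
open Topology

theorem linear_homogeneous_BVP_trivial
    (κ κL L : ℝ) (hκ : 0 < κ) (hκL : 0 < κL) (hL : 0 < L)
    (h : ℝ) (hh : 0 < h)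
    (q : ℝ → ℝ) (hqc : ContinuousOn q (Icc (0:ℝ) 1))
    (hq : ∀ y ∈ Icc (0:ℝ) 1, 0 ≤ q y)
    (φ φ' φ'' : ℝ → ℝ)
    (hφ1 : ∀ y ∈ Icc (0:ℝ) 1, HasDerivWithinAt φ (φ' y) (Icc (0:ℝ) 1) y)
    (hφ2 : ∀ y ∈ Icc (0:ℝ) 1, HasDerivWithinAt φ' (φ'' y) (Icc (0:ℝ) 1) y)
    (hφ2c : ContinuousOn φ'' (Icc (0:ℝ) 1))
    (hode : ∀ y ∈ Icc (0:ℝ) 1, (κ / h ^ 2) * φ'' y = q y * φ y)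
    (hb0 : φ' 0 = 0)
    (hb1 : φ 1 + (L * κ / (κL * h)) * φ' 1 = 0) :
    ∀ y ∈ Icc (0:ℝ) 1, φ y = 0 := by
  have hφc : ContinuousOn φ (Icc (0:ℝ) 1) := fun y hy => (hφ1 y hy).continuousWithinAt
  have hφ'c : ContinuousOn φ' (Icc (0:ℝ) 1) := fun y hy => (hφ2 y hy).continuousWithinAt
  set g : ℝ → ℝ := fun y => φ'' y * φ y + φ' y * φ' y with hg
  have hgc : ContinuousOn g (Icc (0:ℝ) 1) := (hφ2c.mul hφc).add (hφ'c.mul hφ'c)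
  have hFc : ContinuousOn (fun y => φ' y * φ y) (Icc (0:ℝ) 1) := hφ'c.mul hφc
  have hFd : ∀ x ∈ Ioo (0:ℝ) 1, HasDerivAt (fun y => φ' y * φ y) (g x) x := by
    intro x hx
    have hmem : Icc (0:ℝ) 1 ∈ 𝓝 x := Icc_mem_nhds hx.1 hx.2
    exact ((hφ2 x (Ioo_subset_Icc_self hx)).hasDerivAt hmem).mul
      ((hφ1 x (Ioo_subset_Icc_self hx)).hasDerivAt hmem)
  have huIcc : uIcc (0:ℝ) 1 = Icc 0 1 := uIcc_of_le zero_le_one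
  have hgint : IntervalIntegrable g volume 0 1 :=
    (huIcc ▸ hgc : ContinuousOn g (uIcc (0:ℝ) 1)).intervalIntegrable
  have key : ∫ y in (0:ℝ)..1, g y = φ' 1 * φ 1 - φ' 0 * φ 0 :=
    integral_eq_sub_of_hasDeriv_right_of_le zero_le_one hFc
      (fun x hx => (hFd x hx).hasDerivWithinAt) hgint
  have h1int : IntervalIntegrable (fun y => φ'' y * φ y) volume 0 1 :=
    (huIcc ▸ (hφ2c.mul hφc) : ContinuousOn _ (uIcc (0:ℝ) 1)).intervalIntegrable
  have h2int : IntervalIntegrable (fun y => φ' y * φ' y) volume 0 1 :=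
    (huIcc ▸ (hφ'c.mul hφ'c) : ContinuousOn _ (uIcc (0:ℝ) 1)).intervalIntegrable
  have hsplit : ∫ y in (0:ℝ)..1, g y =
      (∫ y in (0:ℝ)..1, φ'' y * φ y) + ∫ y in (0:ℝ)..1, φ' y * φ' y :=
    integral_add h1int h2int
  set A := ∫ y in (0:ℝ)..1, φ' y * φ' y with hA
  set B := ∫ y in (0:ℝ)..1, φ'' y * φ y with hB
  have hA0 : 0 ≤ A := integral_nonneg zero_le_one (fun x _ => mul_self_nonneg _)
  -- (κ/h²) * B = ∫ q φ² ≥ 0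
  have hBpos : 0 ≤ B := by
    have hscale : (κ / h ^ 2) * B = ∫ y in (0:ℝ)..1, q y * (φ y * φ y) := by
      rw [hB, ← intervalIntegral.integral_const_mul]
      refine integral_congr fun y hy => ?_
      rw [huIcc] at hy
      have := hode y hy
      linear_combination this * φ y
    have hnn : 0 ≤ ∫ y in (0:ℝ)..1, q y * (φ y * φ y) :=
      integral_nonneg zero_le_one
        (fun x hx => mul_nonneg (hq x hx) (mul_self_nonneg _))
    have hκh : 0 < κ / h ^ 2 := div_pos hκ (by positivity)
    nlinarith [hscale, hnn]
  have hc : 0 < L * κ / (κL * h) := by positivity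
  have hBA : B + A = φ' 1 * φ 1 := by
    rw [← hsplit, key, hb0]; ring
  have hφ1eq : φ 1 = -(L * κ / (κL * h)) * φ' 1 := by linarith
  have hneg : B + A = -(L * κ / (κL * h)) * (φ' 1 * φ' 1) := by
    rw [hBA, hφ1eq]; ring
  have hA_eq : A = 0 := by nlinarith [mul_self_nonneg (φ' 1)]
  have hφ'1 : φ' 1 = 0 := by
    have hsq : φ' 1 * φ' 1 = 0 := by
      nlinarith [mul_self_nonneg (φ' 1), mul_nonneg hc.le (mul_self_nonneg (φ' 1))]
    exact mul_self_eq_zero.mp hsq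
  have hφ1z : φ 1 = 0 := by rw [hφ1eq, hφ'1]; ring
  -- φ' vanishes on [0,1]
  have hφ'zero : ∀ x ∈ Icc (0:ℝ) 1, φ' x = 0 := by
    by_contra hcon
    push_neg at hcon
    obtain ⟨c, hc1, hc2⟩ := hcon
    have hlt : (∫ y in (0:ℝ)..1, (0:ℝ)) < ∫ y in (0:ℝ)..1, φ' y * φ' y :=
      integral_lt_integral_of_continuousOn_of_le_of_exists_lt zero_lt_one
        continuousOn_const (hφ'c.mul hφ'c)
        (fun x _ => mul_self_nonneg _)
        ⟨c, hc1, mul_self_pos.mpr hc2⟩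
    rw [intervalIntegral.integral_zero] at hlt
    rw [← hA] at hlt
    linarith
  -- φ is constant
  have hconst : ∀ x ∈ Icc (0:ℝ) 1, φ x = φ 0 := by
    apply constant_of_has_deriv_right_zero hφc
    intro x hx
    have hmem : Icc (0:ℝ) 1 ∈ 𝓝[Ici x] x := by
      refine Filter.mem_of_superset (inter_mem_nhdsWithin (Ici x) (Iic_mem_nhds hx.2)) ?_
      rintro y ⟨hy1, hy2⟩
      exact ⟨le_trans hx.1 hy1, hy2⟩
    have := (hφ1 x (Ico_subset_Icc_self hx)).mono_of_mem_nhdsWithin hmem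
    rwa [hφ'zero x (Ico_subset_Icc_self hx)] at this
  have hφ0 : φ 0 = 0 := by
    have := hconst 1 (right_mem_Icc.mpr zero_le_one)
    rw [hφ1z] at this; exact this.symm
  intro y hy
  rw [hconst y hy, hφ0]
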